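/- Let (X, d, μ) be a separable metric probability space. A point u ∈ X is a strong mode (i.e. liminf_{r→0} μ(B(u,r))/M_r ≥ 1, where M_r = sup_x μ(B(x,r))) if and only if there exists a sequence u_n → u such that for every null sequence (r_n), liminf_{n→∞} μ(B(u_n, r_n))/M_{r_n} ≥ 1. -/

import Mathlib

open MeasureTheory Metric Filter Topology

/-- Ball-mass ratio with the conventions `c/0 = ∞` for `c > 0` and `0/0 = 1`. -/
noncomputable def mRatio (a b : ENNReal) : ENNReal :=
  if b = 0 then (if a = 0 then 1 else ⊤) else a / b

section Aux

variable {X : Type*} [MetricSpace X] [TopologicalSpace.SeparableSpace X]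
    [MeasurableSpace X] [BorelSpace X] (μ : Measure X) [IsProbabilityMeasure μ]

lemma Msup_le_one (r : ℝ) : (⨆ x : X, μ (ball x r)) ≤ 1 :=
  iSup_le fun _ => prob_le_one

lemma Msup_ne_top (r : ℝ) : (⨆ x : X, μ (ball x r)) ≠ ⊤ :=
  ((Msup_le_one μ r).trans_lt ENNReal.one_lt_top).ne

lemma Msup_mono {r r' : ℝ} (h : r ≤ r') :
    (⨆ x : X, μ (ball x r)) ≤ ⨆ x : X, μ (ball x r') :=
  iSup_mono fun x => measure_mono (ball_subset_ball h)

lemma Msup_pos {r : ℝ} (hr : 0 < r) : 0 < ⨆ x : X, μ (ball x r) := by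
  rcases TopologicalSpace.exists_countable_dense X with ⟨s, hsc, hsd⟩
  rw [pos_iff_ne_zero]
  intro h
  have hball : ∀ x : X, μ (ball x r) = 0 := fun x =>
    le_antisymm (h ▸ le_iSup (fun x => μ (ball x r)) x) zero_le
  have hnull : μ (⋃ x ∈ s, ball x r) = 0 :=
    (measure_biUnion_null_iff hsc).2 fun x _ => hball x
  have huniv : (⋃ x ∈ s, ball x r) = Set.univ := by
    ext y
    simp only [Set.mem_iUnion, Set.mem_univ, iff_true]
    rcases Metric.dense_iff.1 hsd y r hr with ⟨x, hx⟩
    exact ⟨x, hx.2, by simpa [mem_ball, dist_comm] using hx.1⟩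
  rw [huniv, measure_univ] at hnull
  exact one_ne_zero hnull

/-- Left lower semicontinuity of `r ↦ ⨆ x, μ (ball x r)`. -/
lemma Msup_left {ρ : ℝ} (hρ : 0 < ρ) {c : ENNReal} (hc : c < ⨆ x : X, μ (ball x ρ)) :
    ∃ s : ℝ, 0 < s ∧ s < ρ ∧ c < ⨆ x : X, μ (ball x s) := by
  rcases lt_iSup_iff.1 hc with ⟨x, hx⟩
  have hmono : Monotone (fun n : ℕ => ball x (ρ - ρ / (n + 2))) := by
    intro m n hmn
    apply ball_subset_ball
    have h2 : (0:ℝ) < (m:ℝ) + 2 := by positivity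
    have h3 : (m:ℝ) + 2 ≤ (n:ℝ) + 2 := by exact_mod_cast by omega
    have := div_le_div_of_nonneg_left hρ.le h2 h3
    linarith
  have hU : (⋃ n : ℕ, ball x (ρ - ρ / (n + 2))) = ball x ρ := by
    apply Set.Subset.antisymm
    · refine Set.iUnion_subset fun n => ball_subset_ball ?_
      have : (0:ℝ) < ρ / (n + 2) := by positivity
      linarith
    · intro y hy
      rw [mem_ball] at hy
      have hd : 0 < ρ - dist y x := by linarith
      obtain ⟨n, hn⟩ := exists_nat_gt (ρ / (ρ - dist y x))
      refine Set.mem_iUnion.2 ⟨n, ?_⟩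
      rw [mem_ball]
      have h2 : (0:ℝ) < (n:ℝ) + 2 := by positivity
      have : ρ / (ρ - dist y x) < (n:ℝ) + 2 := by linarith
      have hρlt : ρ < ((n:ℝ) + 2) * (ρ - dist y x) := by
        calc ρ = (ρ / (ρ - dist y x)) * (ρ - dist y x) := by field_simp
        _ < ((n:ℝ) + 2) * (ρ - dist y x) := by
            exact mul_lt_mul_of_pos_right this hd
      have : ρ / ((n:ℝ) + 2) < ρ - dist y x := by
        rw [div_lt_iff₀ h2]; linarith [hρlt]
      linarith
  have hμ : μ (ball x ρ) = ⨆ n : ℕ, μ (ball x (ρ - ρ / (n + 2))) := by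
    rw [← hU]
    exact hmono.directed_le.measure_iUnion (μ := μ)
  rw [hμ] at hx
  rcases lt_iSup_iff.1 hx with ⟨n, hn⟩
  have h2 : (0:ℝ) < ρ / ((n:ℝ) + 2) := by positivity
  have hlt : ρ / ((n:ℝ) + 2) < ρ := by
    have hn2 : (1:ℝ) < (n:ℝ) + 2 := by
      have := Nat.cast_nonneg (α := ℝ) n
      linarith
    exact div_lt_self hρ hn2
  refine ⟨ρ - ρ / (n + 2), by linarith, by linarith, ?_⟩
  exact hn.trans_le (le_iSup (fun y => μ (ball y (ρ - ρ / (n + 2)))) x)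

end Aux

theorem stmt6 {X : Type*} [MetricSpace X] [TopologicalSpace.SeparableSpace X]
    [MeasurableSpace X] [BorelSpace X] (μ : Measure X) [IsProbabilityMeasure μ]
    (u : X) :
    (1 ≤ Filter.liminf
        (fun r : ℝ => mRatio (μ (ball u r)) (⨆ x : X, μ (ball x r))) (𝓝[>] (0:ℝ)))
    ↔ ∃ us : ℕ → X, Tendsto us atTop (𝓝 u) ∧
        ∀ r : ℕ → ℝ, (∀ n, 0 < r n) → Tendsto r atTop (𝓝 0) →
          1 ≤ Filter.liminf
            (fun n => mRatio (μ (ball (us n) (r n))) (⨆ x : X, μ (ball x (r n)))) atTop := by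
  set f : ℝ → ENNReal := fun r => mRatio (μ (ball u r)) (⨆ x : X, μ (ball x r)) with hf
  constructor
  · -- easy direction: take the constant sequence
    intro h
    refine ⟨fun _ => u, tendsto_const_nhds, ?_⟩
    intro r hrpos hr0
    have hmap : Tendsto r atTop (𝓝[>] (0:ℝ)) :=
      tendsto_nhdsWithin_of_tendsto_nhds_of_eventually_within _ hr0
        (Eventually.of_forall hrpos)
    calc (1:ENNReal) ≤ liminf f (𝓝[>] (0:ℝ)) := h
      _ ≤ liminf f (map r atTop) := liminf_le_liminf_of_le hmap
      _ = liminf (fun n => f (r n)) atTop := by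
          rw [Filter.liminf, Filter.liminf, Filter.map_map]; rfl
  · -- hard direction
    rintro ⟨us, hus, hr⟩
    by_contra hL
    push_neg at hL
    obtain ⟨b, hLb, hb1⟩ := exists_between hL
    obtain ⟨a, hba, ha1⟩ := exists_between hb1
    have ha0 : a ≠ 0 := ((show (0:ENNReal) ≤ b from zero_le).trans_lt hba).ne'
    have hat : a ≠ ⊤ := (ha1.trans ENNReal.one_lt_top).ne
    have hfreq : ∃ᶠ ρ in 𝓝[>] (0:ℝ), f ρ < b := frequently_lt_of_liminf_lt (by isBoundedDefault) hLb
    -- extract a null sequence ρ with small ratio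
    have hchoice : ∀ k : ℕ, ∃ ρ : ℝ, (0 < ρ ∧ ρ < 1 / (k + 1)) ∧ f ρ < b := by
      intro k
      have hS : Set.Ioo (0:ℝ) (1 / (k + 1)) ∈ 𝓝[>] (0:ℝ) :=
        Ioo_mem_nhdsGT_of_mem ⟨le_refl _, by positivity⟩
      rcases (hfreq.and_eventually (eventually_of_mem hS fun _ h => h)).exists with
        ⟨ρ, hρb, hρS⟩
      exact ⟨ρ, ⟨hρS.1, hρS.2⟩, hρb⟩
    choose ρ hρmem hρb using hchoice
    have hρpos : ∀ k, 0 < ρ k := fun k => (hρmem k).1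
    have hρsmall : ∀ k, ρ k < 1 / (k + 1) := fun k => (hρmem k).2
    -- turn ratio bound into a measure bound
    have hMpos : ∀ k, (0:ENNReal) < ⨆ x : X, μ (ball x (ρ k)) := fun k =>
      Msup_pos μ (hρpos k)
    have hmeas : ∀ k, μ (ball u (ρ k)) < b * ⨆ x : X, μ (ball x (ρ k)) := by
      intro k
      have hM0 : (⨆ x : X, μ (ball x (ρ k))) ≠ 0 := (hMpos k).ne'
      have := hρb k
      rw [hf] at this
      simp only [mRatio, if_neg hM0] at this
      exact (ENNReal.div_lt_iff (Or.inl hM0) (Or.inl (Msup_ne_top μ _))).1 this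
    -- choose s k < ρ k with a * M(ρ k) < M(s k)
    have hsc : ∀ k : ℕ, ∃ s : ℝ, 0 < s ∧ s < ρ k ∧
        a * (⨆ x : X, μ (ball x (ρ k))) < ⨆ x : X, μ (ball x s) := by
      intro k
      have hlt : a * (⨆ x : X, μ (ball x (ρ k))) < ⨆ x : X, μ (ball x (ρ k)) := by
        nth_rewrite 2 [← one_mul (⨆ x : X, μ (ball x (ρ k)))]
        exact ENNReal.mul_lt_mul_left (hMpos k).ne' (Msup_ne_top μ _) ha1
      exact Msup_left μ (hρpos k) hlt
    choose s hs0 hsρ hsM using hsc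
    -- choose indices past which us is close to u
    have hdist : Tendsto (fun n => dist (us n) u) atTop (𝓝 0) :=
      tendsto_iff_dist_tendsto_zero.1 hus
    have hN' : ∀ k : ℕ, ∃ N : ℕ, ∀ n ≥ N, dist (us n) u < ρ k - s k := by
      intro k
      have hε : (0:ℝ) < ρ k - s k := by linarith [hsρ k]
      rcases (Metric.tendsto_atTop.1 hdist) (ρ k - s k) hε with ⟨N, hN⟩
      exact ⟨N, fun n hn => by
        have := hN n hn
        rwa [Real.dist_eq, sub_zero, abs_of_nonneg dist_nonneg] at this⟩
    choose N' hN'spec using hN'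
    set N : ℕ → ℕ := fun k => (Finset.range (k + 1)).sup N' with hNdef
    have hNmono : Monotone N := fun i j hij =>
      Finset.sup_mono (Finset.range_subset_range.2 (by omega))
    have hN'leN : ∀ k, N' k ≤ N k := fun k =>
      Finset.le_sup (Finset.mem_range.2 (Nat.lt_succ_self k))
    have hN : ∀ k, ∀ n ≥ N k, dist (us n) u < ρ k - s k := fun k n hn =>
      hN'spec k n (le_trans (hN'leN k) hn)
    classical
    set K : ℕ → ℕ := fun n => Nat.findGreatest (fun k => N k ≤ n) n with hKdef
    set r : ℕ → ℝ := fun n =>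
      if N 0 ≤ n then ρ (K n) - dist (us n) u else 1 with hrdef
    have hK1 : ∀ n, N 0 ≤ n → N (K n) ≤ n := fun n h =>
      Nat.findGreatest_spec (P := fun k => N k ≤ n) (Nat.zero_le n) h
    have hK2 : ∀ k n, k ≤ n → N k ≤ n → k ≤ K n := fun k n hk hNk =>
      Nat.le_findGreatest hk hNk
    have hkey : ∀ n, N 0 ≤ n → s (K n) < r n ∧ r n ≤ ρ (K n) := by
      intro n hn
      have hd := hN (K n) n (hK1 n hn)
      have hnn : (0:ℝ) ≤ dist (us n) u := dist_nonneg
      rw [hrdef]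
      simp only [if_pos hn]
      constructor <;> linarith
    have hrpos : ∀ n, 0 < r n := by
      intro n
      by_cases hn : N 0 ≤ n
      · exact lt_trans (hs0 (K n)) (hkey n hn).1
      · rw [hrdef]; simp [hn]
    have hrnull : Tendsto r atTop (𝓝 0) := by
      rw [Metric.tendsto_atTop]
      intro ε hε
      obtain ⟨k, hk⟩ := exists_nat_one_div_lt hε
      refine ⟨max (N k) k, fun n hn => ?_⟩
      have hnNk : N k ≤ n := le_trans (le_max_left _ _) hn
      have hnk : k ≤ n := le_trans (le_max_right _ _) hn
      have hn0 : N 0 ≤ n := le_trans (hNmono (Nat.zero_le k)) hnNk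
      have hKk : k ≤ K n := hK2 k n hnk hnNk
      have h1 : r n ≤ ρ (K n) := (hkey n hn0).2
      have h2 : ρ (K n) < 1 / (K n + 1) := hρsmall (K n)
      have h3 : (1:ℝ) / (K n + 1) ≤ 1 / (k + 1) := by
        apply one_div_le_one_div_of_le (by positivity)
        exact_mod_cast by omega
      rw [Real.dist_eq, sub_zero, abs_of_pos (hrpos n)]
      linarith
    -- the key upper bound on the ratio along us with radii r
    have heven : ∀ n, N 0 ≤ n →
        mRatio (μ (ball (us n) (r n))) (⨆ x : X, μ (ball x (r n))) ≤ b / a := by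
      intro n hn
      set k := K n with hk
      have hkey' := hkey n hn
      have hd := hN k n (hK1 n hn)
      have hrn : r n = ρ k - dist (us n) u := by rw [hrdef]; simp [hn, hk]
      have hsub : ball (us n) (r n) ⊆ ball u (ρ k) := by
        intro y hy
        rw [mem_ball] at hy ⊢
        have := dist_triangle y (us n) u
        rw [hrn] at hy
        linarith
      have hD0 : (⨆ x : X, μ (ball x (r n))) ≠ 0 := (Msup_pos μ (hrpos n)).ne'
      have hDt : (⨆ x : X, μ (ball x (r n))) ≠ ⊤ := Msup_ne_top μ _
      simp only [mRatio, if_neg hD0]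
      rw [ENNReal.div_le_iff_le_mul (Or.inl hD0) (Or.inl hDt)]
      have step1 : μ (ball (us n) (r n)) ≤ b * ⨆ x : X, μ (ball x (ρ k)) :=
        le_trans (measure_mono hsub) (hmeas k).le
      have step2 : (b / a) * (a * ⨆ x : X, μ (ball x (ρ k)))
          = b * ⨆ x : X, μ (ball x (ρ k)) := by
        rw [div_eq_mul_inv, mul_assoc, ← mul_assoc a⁻¹ a,
          ENNReal.inv_mul_cancel ha0 hat, one_mul]
      have step3 : a * (⨆ x : X, μ (ball x (ρ k))) ≤ ⨆ x : X, μ (ball x (r n)) :=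
        le_trans (hsM k).le (Msup_mono μ hkey'.1.le)
      calc μ (ball (us n) (r n)) ≤ b * ⨆ x : X, μ (ball x (ρ k)) := step1
        _ = (b / a) * (a * ⨆ x : X, μ (ball x (ρ k))) := step2.symm
        _ ≤ (b / a) * ⨆ x : X, μ (ball x (r n)) :=
            mul_le_mul_right step3 _
    have hliminf_le :
        liminf (fun n => mRatio (μ (ball (us n) (r n))) (⨆ x : X, μ (ball x (r n)))) atTop
          ≤ b / a :=
      liminf_le_of_frequently_le
        ((eventually_atTop.2 ⟨N 0, heven⟩).frequently)
    have hyp := hr r hrpos hrnull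
    have hdiv : b / a < 1 := by
      rw [ENNReal.div_lt_iff (Or.inl ha0) (Or.inl hat), one_mul]
      exact hba
    exact absurd (hyp.trans hliminf_le) (not_le.2 hdiv)
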